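/- Let d ≥ 2 and q ≥ 2 with p = (q^d - 1)/(q - 1) prime. Then the product ∏_{i=1}^{d-1} (q^d - q^i) is congruent to d modulo p. -/

import Mathlib

theorem stmt_3 (d q : ℕ) (hd : 2 ≤ d) (hq : 2 ≤ q)
    (hp : Nat.Prime ((q ^ d - 1) / (q - 1))) :
    (∏ i ∈ Finset.Icc 1 (d - 1), (q ^ d - q ^ i)) ≡ d [MOD (q ^ d - 1) / (q - 1)] := by
  set p := (q ^ d - 1) / (q - 1) with hpdef
  haveI := Fact.mk hp
  have hq1 : 1 ≤ q - 1 := by omega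
  have hdvd : q - 1 ∣ q ^ d - 1 := by
    simpa using Nat.sub_dvd_pow_sub_pow q 1 d
  have hmul : p * (q - 1) = q ^ d - 1 := Nat.div_mul_cancel hdvd
  -- p > q^e - 1 for all e ≤ d - 1
  have hqd1 : 1 ≤ q ^ d := Nat.one_le_pow _ _ (by omega)
  have hbig : ∀ e, e ≤ d - 1 → q ^ e - 1 < p := by
    intro e he
    have h1 : q ^ e ≤ q ^ (d - 1) := Nat.pow_le_pow_right (by omega) he
    have h2 : q ^ (d - 1) * q = q ^ d := by
      rw [← pow_succ]; congr 1; omega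
    have h3 : (q ^ (d - 1) - 1) * (q - 1) < q ^ d - 1 := by
      have h4 : q ≤ q ^ (d - 1) := Nat.le_self_pow (by omega) q
      zify [show 1 ≤ q ^ (d-1) by omega, show (1:ℕ) ≤ q by omega, hqd1]
      have h2' : (q:ℤ) ^ (d-1) * q = q ^ d := by exact_mod_cast h2
      nlinarith [show (2:ℤ) ≤ q from by exact_mod_cast hq, show (2:ℤ) ≤ q ^ (d-1) from by exact_mod_cast le_trans hq h4]
    by_contra hcon
    push_neg at hcon
    have : q ^ d - 1 ≤ (q ^ (d-1) - 1) * (q - 1) := by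
      calc q ^ d - 1 = p * (q - 1) := hmul.symm
        _ ≤ (q ^ e - 1) * (q - 1) := Nat.mul_le_mul_right _ hcon
        _ ≤ (q ^ (d-1) - 1) * (q - 1) := Nat.mul_le_mul_right _ (by omega)
    omega
  have hpdvd : (p : ℕ) ∣ q ^ d - 1 := ⟨q - 1, hmul.symm⟩
  -- q^d = 1 in ZMod p
  have hζd : (q : ZMod p) ^ d = 1 := by
    have : ((q ^ d - 1 : ℕ) : ZMod p) = 0 := (ZMod.natCast_eq_zero_iff _ _).mpr hpdvd
    rw [Nat.cast_sub hqd1] at this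
    push_cast at this
    linear_combination this
  -- q is a primitive d-th root of unity in ZMod p
  have hprim : IsPrimitiveRoot (q : ZMod p) d := by
    refine ⟨hζd, fun l hl => ?_⟩
    rcases Nat.eq_zero_or_pos l with rfl | hlpos
    · exact Dvd.intro 0 rfl
    have : ∀ r, r < d → (q : ZMod p) ^ r = 1 → r = 0 := by
      intro r hr hqr
      by_contra hr0
      have h1 : 1 ≤ q ^ r := Nat.one_le_pow _ _ (by omega)
      have : ((q ^ r - 1 : ℕ) : ZMod p) = 0 := by
        rw [Nat.cast_sub h1]; push_cast; rw [hqr]; ring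
      have hdd : p ∣ q ^ r - 1 := (ZMod.natCast_eq_zero_iff _ _).mp this
      have hlt : q ^ r - 1 < p := hbig r (by omega)
      have hpos : 0 < q ^ r - 1 := by
        have : 2 ≤ q ^ r := le_trans hq (Nat.le_self_pow (by omega) q)
        omega
      exact absurd (Nat.le_of_dvd hpos hdd) (by omega)
    have hrl : (q : ZMod p) ^ (l % d) = 1 := by
      have h := hl
      rw [← Nat.div_add_mod l d, pow_add, pow_mul, hζd, one_pow, one_mul] at h
      exact h
    have := this (l % d) (Nat.mod_lt _ (by omega)) hrl
    exact Nat.dvd_of_mod_eq_zero this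
  -- now compute
  rw [Nat.ModEq]
  rw [← ZMod.natCast_eq_natCast_iff'] at *
  push_cast
  have key : ∀ i ∈ Finset.Icc 1 (d - 1), ((q ^ d - q ^ i : ℕ) : ZMod p)
      = 1 - (q : ZMod p) ^ i := by
    intro i hi
    simp only [Finset.mem_Icc] at hi
    rw [Nat.cast_sub (Nat.pow_le_pow_right (by omega) (by omega))]
    push_cast
    rw [hζd]
  rw [Finset.prod_congr rfl key]
  have h1 := IsPrimitiveRoot.prod_one_sub_pow_eq_order (n := d - 1) (μ := (q : ZMod p))
    (by rwa [show d - 1 + 1 = d by omega])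
  rw [← Finset.Ico_add_one_right_eq_Icc, Finset.prod_Ico_eq_prod_range]
  simp only [Nat.succ_sub_one, Nat.add_sub_cancel, Nat.add_comm 1]
  rw [h1, Nat.cast_sub (show 1 ≤ d by omega)]
  push_cast
  ring
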